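/- Let X_1,…,X_n be independent symmetric real random variables, and let f : ℝ → ℝ be an increasing concave function with f(0) = 0. Set Y = |Σ_i X_i| and Z = (Σ_i X_i²)^{1/2}. Then E[f(Z)] ≤ c · E[f(Y)] with c = (1/√2 − 1/4)^{−1}. -/

import Mathlib

open Finset MeasureTheory ProbabilityTheory
open scoped symmDiff

namespace LowtherAux


variable {n : ℕ}

/-- sign of a boolean -/
def sg (b : Bool) : ℝ := if b then 1 else -1

lemma sg_mul_self (b : Bool) : sg b * sg b = 1 := by cases b <;> simp [sg]

lemma sg_not (b : Bool) : sg (!b) = - sg b := by cases b <;> simp [sg]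

lemma sg_abs (b : Bool) : |sg b| = 1 := by cases b <;> simp [sg]

/-- Walsh function -/
def wal (T : Finset (Fin n)) (s : Fin n → Bool) : ℝ := ∏ i ∈ T, sg (s i)

lemma wal_mul_self (T : Finset (Fin n)) (s : Fin n → Bool) : wal T s * wal T s = 1 := by
  rw [wal, ← prod_mul_distrib]
  exact prod_eq_one fun i _ => sg_mul_self _

lemma wal_update_not_mem {T : Finset (Fin n)} {i : Fin n} (h : i ∉ T) (s : Fin n → Bool)
    (b : Bool) : wal T (Function.update s i b) = wal T s := by
  refine prod_congr rfl fun j hj => ?_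
  rw [Function.update_of_ne (by rintro rfl; exact h hj)]

/-- flip coordinate i -/
def flip' (i : Fin n) (s : Fin n → Bool) : Fin n → Bool := Function.update s i (!s i)

lemma flip'_involutive (i : Fin n) : Function.Involutive (flip' i) := by
  intro s
  funext j
  by_cases h : j = i
  · subst h; simp [flip']
  · simp [flip', Function.update_of_ne h]

lemma wal_flip' {T : Finset (Fin n)} {i : Fin n} (h : i ∈ T) (s : Fin n → Bool) :
    wal T (flip' i s) = - wal T s := by
  rw [wal, wal, ← Finset.mul_prod_erase _ _ h, ← Finset.mul_prod_erase _ (fun j => sg (s j)) h]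
  have h1 : sg (flip' i s i) = - sg (s i) := by simp [flip', sg_not]
  have h2 : ∏ j ∈ T.erase i, sg (flip' i s j) = ∏ j ∈ T.erase i, sg (s j) := by
    refine prod_congr rfl fun j hj => ?_
    rw [flip', Function.update_of_ne (Finset.ne_of_mem_erase hj)]
  rw [h1, h2, neg_mul]

lemma sum_wal_eq_zero {T : Finset (Fin n)} (hT : T ≠ ∅) :
    ∑ s : Fin n → Bool, wal T s = 0 := by
  obtain ⟨i, hi⟩ := Finset.nonempty_iff_ne_empty.2 hT
  have hbij : ∑ s : Fin n → Bool, wal T s = ∑ s : Fin n → Bool, wal T (flip' i s) :=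
    (Fintype.sum_equiv ((flip'_involutive i).toPerm) _ _ (fun s => rfl)).symm
  have : ∑ s : Fin n → Bool, wal T (flip' i s) = - ∑ s : Fin n → Bool, wal T s := by
    rw [← Finset.sum_neg_distrib]
    exact Finset.sum_congr rfl fun s _ => wal_flip' hi s
  linarith [hbij, this]

lemma card_bool_fun : (Finset.univ : Finset (Fin n → Bool)).card = 2 ^ n := by
  simp [Fintype.card_fun]

lemma sum_wal_mul_wal (T U : Finset (Fin n)) :
    ∑ s : Fin n → Bool, wal T s * wal U s = if T = U then (2 ^ n : ℝ) else 0 := by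
  have key : ∀ s, wal T s * wal U s = wal (T ∆ U) s := by
    intro s
    have h1 : wal T s * wal U s = wal (T ∪ U) s * wal (T ∩ U) s := by
      rw [wal, wal, wal, wal, prod_union_inter]
    have h2 : T ∪ U = (T ∆ U) ∪ (T ∩ U) := by
      ext x; simp [Finset.mem_symmDiff]; tauto
    have h3 : Disjoint (T ∆ U) (T ∩ U) := by
      rw [Finset.disjoint_left]
      intro x hx hx'
      rw [Finset.mem_symmDiff] at hx
      simp at hx'
      tauto
    rw [h1, h2]
    show (∏ i ∈ T ∆ U ∪ T ∩ U, sg (s i)) * wal (T ∩ U) s = wal (T ∆ U) s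
    rw [Finset.prod_union h3]
    rw [mul_assoc]
    show wal (T ∆ U) s * (wal (T ∩ U) s * wal (T ∩ U) s) = wal (T ∆ U) s
    rw [wal_mul_self, mul_one]
  simp_rw [key]
  by_cases h : T = U
  · subst h
    simp only [symmDiff_self, if_pos rfl]
    have : ∀ s : Fin n → Bool, wal (⊥ : Finset (Fin n)) s = 1 := fun s => prod_empty
    rw [Finset.sum_congr rfl fun s _ => this s, Finset.sum_const, card_bool_fun]
    simp
  · rw [if_neg h]
    exact sum_wal_eq_zero (fun hc => h (symmDiff_eq_bot.1 hc))


/-- delta in the point variable -/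
lemma sum_wal_point (s s' : Fin n → Bool) :
    ∑ T : Finset (Fin n), wal T s * wal T s' = if s = s' then (2 ^ n : ℝ) else 0 := by
  have key : ∑ T : Finset (Fin n), wal T s * wal T s'
      = ∏ i : Fin n, (sg (s i) * sg (s' i) + 1) := by
    rw [Finset.prod_add]
    rw [← Finset.powerset_univ]
    refine (Finset.sum_congr rfl fun T _ => ?_).symm
    rw [Finset.prod_const_one, mul_one, wal, wal, ← prod_mul_distrib]
  rw [key]
  by_cases h : s = s'
  · subst h
    rw [if_pos rfl]
    have : ∀ i : Fin n, sg (s i) * sg (s i) + 1 = 2 := by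
      intro i; cases s i <;> norm_num [sg]
    rw [Finset.prod_congr rfl fun i _ => this i, Finset.prod_const]
    simp
  · rw [if_neg h]
    obtain ⟨i, hi⟩ : ∃ i, s i ≠ s' i := by
      by_contra hc
      push_neg at hc
      exact h (funext hc)
    refine Finset.prod_eq_zero (Finset.mem_univ i) ?_
    cases hsi : s i <;> cases hsi' : s' i <;> simp_all [sg]

/-- Fourier coefficient -/
noncomputable def coef (F : (Fin n → Bool) → ℝ) (T : Finset (Fin n)) : ℝ :=
  (2 ^ n : ℝ)⁻¹ * ∑ s : Fin n → Bool, F s * wal T s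

lemma expansion (F : (Fin n → Bool) → ℝ) (s : Fin n → Bool) :
    F s = ∑ T : Finset (Fin n), coef F T * wal T s := by
  have h2 : (0:ℝ) < 2 ^ n := by positivity
  simp only [coef]
  simp_rw [mul_assoc, ← Finset.mul_sum, Finset.sum_mul]
  rw [Finset.sum_comm]
  have : ∀ s' : Fin n → Bool, ∑ T : Finset (Fin n), F s' * wal T s' * wal T s
      = F s' * (if s' = s then (2^n:ℝ) else 0) := by
    intro s'
    simp_rw [mul_assoc, ← Finset.mul_sum]
    rw [sum_wal_point s' s]
  rw [Finset.sum_congr rfl fun s' _ => this s']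
  have : ∑ s' : Fin n → Bool, (F s' * if s' = s then (2^n:ℝ) else 0)
      = ∑ s' : Fin n → Bool, (if s' = s then F s' * (2^n:ℝ) else 0) := by
    refine Finset.sum_congr rfl fun s' _ => ?_
    by_cases h : s' = s <;> simp [h]
  rw [this, Finset.sum_ite_eq' Finset.univ s (fun s' => F s' * (2^n:ℝ)), if_pos (Finset.mem_univ s)]
  field_simp

lemma parseval (F : (Fin n → Bool) → ℝ) :
    ∑ T : Finset (Fin n), (coef F T)^2 = (2 ^ n : ℝ)⁻¹ * ∑ s : Fin n → Bool, (F s)^2 := by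
  have : ∀ T : Finset (Fin n), (coef F T)^2
      = (2 ^ n : ℝ)⁻¹ * ∑ s : Fin n → Bool, (coef F T * wal T s) * F s := by
    intro T
    simp_rw [mul_assoc]
    rw [← Finset.mul_sum, coef]
    have : ∑ s : Fin n → Bool, wal T s * F s = ∑ s : Fin n → Bool, F s * wal T s :=
      Finset.sum_congr rfl fun s _ => mul_comm _ _
    rw [this, ← mul_assoc, pow_two]
    show _ = (2 ^ n : ℝ)⁻¹ * coef F T * ∑ s : Fin n → Bool, F s * wal T s
    rw [coef]
    ring
  rw [Finset.sum_congr rfl fun T _ => this T, ← Finset.mul_sum, Finset.sum_comm]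
  congr 1
  refine Finset.sum_congr rfl fun s _ => ?_
  rw [← Finset.sum_mul, ← expansion, pow_two]

/-- discrete derivative -/
noncomputable def D (F : (Fin n → Bool) → ℝ) (i : Fin n) (s : Fin n → Bool) : ℝ :=
  (F (Function.update s i true) - F (Function.update s i false)) / 2

lemma pair_sum (g : (Fin n → Bool) → ℝ) (i : Fin n) :
    ∑ s : Fin n → Bool, (g (Function.update s i true) + g (Function.update s i false))
      = 2 * ∑ s : Fin n → Bool, g s := by
  have h1 : ∀ s : Fin n → Bool,
      g (Function.update s i true) + g (Function.update s i false) = g s + g (flip' i s) := by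
    intro s
    cases hsi : s i
    · have e1 : Function.update s i false = s := by
        rw [← hsi]; exact Function.update_eq_self i s
      have e2 : Function.update s i true = flip' i s := by
        rw [flip', hsi]; rfl
      rw [e1, e2, add_comm]
    · have e1 : Function.update s i true = s := by
        rw [← hsi]; exact Function.update_eq_self i s
      have e2 : Function.update s i false = flip' i s := by
        rw [flip', hsi]; rfl
      rw [e1, e2]
  rw [Finset.sum_congr rfl fun s _ => h1 s, Finset.sum_add_distrib]
  have : ∑ s : Fin n → Bool, g (flip' i s) = ∑ s : Fin n → Bool, g s :=
    Fintype.sum_equiv ((flip'_involutive i).toPerm) _ _ (fun s => rfl)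
  rw [this]; ring

lemma wal_update (T : Finset (Fin n)) (i : Fin n) (hi : i ∈ T) (s : Fin n → Bool) (b : Bool) :
    wal T (Function.update s i b) = sg b * wal (T.erase i) s := by
  rw [wal, ← Finset.mul_prod_erase _ _ hi, Function.update_self]
  congr 1
  exact wal_update_not_mem (Finset.notMem_erase i T) s b

lemma coef_eq_coef_D (F : (Fin n → Bool) → ℝ) {T : Finset (Fin n)} {i : Fin n} (hi : i ∈ T) :
    coef F T = coef (D F i) (T.erase i) := by
  have key : ∑ s : Fin n → Bool, F s * wal T s
      = ∑ s : Fin n → Bool, D F i s * wal (T.erase i) s := by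
    have h2 : (2:ℝ) * ∑ s : Fin n → Bool, F s * wal T s
        = 2 * ∑ s : Fin n → Bool, D F i s * wal (T.erase i) s := by
      rw [← pair_sum (fun s => F s * wal T s) i]
      rw [Finset.mul_sum]
      refine Finset.sum_congr rfl fun s _ => ?_
      rw [wal_update T i hi s true, wal_update T i hi s false, D]
      simp only [sg, if_true, Bool.false_eq_true, if_false]
      ring
    linarith
  rw [coef, coef, key]

lemma sum_coef_sq_mem_le (F : (Fin n → Bool) → ℝ) (i : Fin n) :
    ∑ T ∈ Finset.univ.filter (fun T : Finset (Fin n) => i ∈ T), (coef F T)^2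
      ≤ (2 ^ n : ℝ)⁻¹ * ∑ s : Fin n → Bool, (D F i s)^2 := by
  rw [← parseval (D F i)]
  have h1 : ∑ T ∈ Finset.univ.filter (fun T : Finset (Fin n) => i ∈ T), (coef F T)^2
      = ∑ T ∈ Finset.univ.filter (fun T : Finset (Fin n) => i ∈ T), (coef (D F i) (T.erase i))^2 :=
    Finset.sum_congr rfl fun T hT => by
      rw [coef_eq_coef_D F (Finset.mem_filter.1 hT).2]
  rw [h1]
  have hinj : ∀ T ∈ Finset.univ.filter (fun T : Finset (Fin n) => i ∈ T),
      ∀ U ∈ Finset.univ.filter (fun T : Finset (Fin n) => i ∈ T),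
      T.erase i = U.erase i → T = U := by
    intro T hT U hU h
    have hiT := (Finset.mem_filter.1 hT).2
    have hiU := (Finset.mem_filter.1 hU).2
    have := congrArg (insert i) h
    rwa [Finset.insert_erase hiT, Finset.insert_erase hiU] at this
  have h2 : ∑ U ∈ (Finset.univ.filter (fun T : Finset (Fin n) => i ∈ T)).image
          (fun T => T.erase i), (coef (D F i) U)^2
      = ∑ T ∈ Finset.univ.filter (fun T : Finset (Fin n) => i ∈ T),
      (coef (D F i) (T.erase i))^2 := Finset.sum_image hinj
  rw [← h2]
  exact Finset.sum_le_sum_of_subset_of_nonneg (Finset.subset_univ _)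
      (fun U _ _ => sq_nonneg _)

lemma coef_eq_zero_of_odd {F : (Fin n → Bool) → ℝ}
    (heven : ∀ s, F (fun j => !(s j)) = F s) {T : Finset (Fin n)} (hodd : ¬ Even T.card) :
    coef F T = 0 := by
  have hν : Function.Involutive (fun s : Fin n → Bool => fun j => !(s j)) := by
    intro s; funext j; simp
  have hwal : ∀ s : Fin n → Bool, wal T (fun j => !(s j)) = (-1:ℝ)^T.card * wal T s := by
    intro s
    rw [wal, wal]
    have : ∀ j ∈ T, sg (!(s j)) = (-1) * sg (s j) := fun j _ => by rw [sg_not]; ring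
    rw [Finset.prod_congr rfl this, Finset.prod_mul_distrib, Finset.prod_const]
  have hkey : ∑ s : Fin n → Bool, F s * wal T s
      = (-1:ℝ)^T.card * ∑ s : Fin n → Bool, F s * wal T s := by
    conv_lhs => rw [← Fintype.sum_equiv (hν.toPerm) _
      (fun s => F s * wal T s) (fun s => rfl)]
    rw [Finset.mul_sum]
    refine Finset.sum_congr rfl fun s _ => ?_
    show F (fun j => !(s j)) * wal T (fun j => !(s j)) = _
    rw [heven s, hwal s]
    ring
  rw [Odd.neg_one_pow (Nat.not_even_iff_odd.1 hodd)] at hkey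
  have : ∑ s : Fin n → Bool, F s * wal T s = 0 := by linarith
  rw [coef, this, mul_zero]


/-- the linear form -/
def lin (a : Fin n → ℝ) (s : Fin n → Bool) : ℝ := ∑ j, a j * sg (s j)

lemma sum_lin_sq (a : Fin n → ℝ) :
    ∑ s : Fin n → Bool, (lin a s)^2 = (2^n : ℝ) * ∑ i, (a i)^2 := by
  have expand : ∀ s : Fin n → Bool, (lin a s)^2
      = ∑ j, ∑ k, (a j * a k) * (wal {j} s * wal {k} s) := by
    intro s
    rw [pow_two, lin, Finset.sum_mul_sum]
    refine Finset.sum_congr rfl fun j _ => Finset.sum_congr rfl fun k _ => ?_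
    simp [wal]
    ring
  rw [Finset.sum_congr rfl fun s _ => expand s]
  rw [Finset.sum_comm]
  have : ∀ j : Fin n, ∑ s : Fin n → Bool, ∑ k, (a j * a k) * (wal {j} s * wal {k} s)
      = (2^n:ℝ) * (a j)^2 := by
    intro j
    rw [Finset.sum_comm]
    have h1 : ∀ k : Fin n, ∑ s : Fin n → Bool, (a j * a k) * (wal {j} s * wal {k} s)
        = (a j * a k) * (if ({j} : Finset (Fin n)) = {k} then (2^n:ℝ) else 0) := by
      intro k
      rw [← Finset.mul_sum, sum_wal_mul_wal]
    rw [Finset.sum_congr rfl fun k _ => h1 k]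
    have h2 : ∀ k : Fin n, (a j * a k) * (if ({j} : Finset (Fin n)) = {k} then (2^n:ℝ) else 0)
        = if k = j then (2^n:ℝ) * (a j)^2 else 0 := by
      intro k
      by_cases h : k = j
      · subst h; simp; ring
      · rw [if_neg h, if_neg (by simpa [Finset.singleton_inj] using Ne.symm h), mul_zero]
    rw [Finset.sum_congr rfl fun k _ => h2 k]
    simp
  rw [Finset.sum_congr rfl fun j _ => this j, ← Finset.mul_sum]

lemma coef_abs_empty (a : Fin n → ℝ) :
    coef (fun s => |lin a s|) ∅ = (2^n : ℝ)⁻¹ * ∑ s : Fin n → Bool, |lin a s| := by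
  rw [coef]
  congr 1
  refine Finset.sum_congr rfl fun s _ => ?_
  rw [wal, Finset.prod_empty, mul_one]

lemma lin_update (a : Fin n → ℝ) (s : Fin n → Bool) (i : Fin n) :
    lin a (Function.update s i true) - lin a (Function.update s i false) = 2 * a i := by
  rw [lin, lin, ← Finset.sum_sub_distrib]
  rw [Finset.sum_eq_single_of_mem i (Finset.mem_univ i)]
  · simp [sg]; ring
  · intro j _ hj
    rw [Function.update_of_ne hj, Function.update_of_ne hj]
    ring

lemma abs_D_le (a : Fin n → ℝ) (i : Fin n) (s : Fin n → Bool) :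
    |D (fun s => |lin a s|) i s| ≤ |a i| := by
  rw [D]
  set u := |lin a (Function.update s i true)| with hu
  set v := |lin a (Function.update s i false)| with hv
  have h1 : |u - v| ≤ |lin a (Function.update s i true) - lin a (Function.update s i false)| :=
    abs_abs_sub_abs_le_abs_sub _ _
  rw [lin_update a s i, abs_mul, abs_two] at h1
  rw [abs_div, abs_two]
  linarith

/-- Szarek's inequality on the discrete cube -/
lemma szarek (a : Fin n → ℝ) :
    Real.sqrt (∑ i, (a i)^2)
      ≤ Real.sqrt 2 * ((2^n : ℝ)⁻¹ * ∑ s : Fin n → Bool, |lin a s|) := by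
  set F : (Fin n → Bool) → ℝ := fun s => |lin a s| with hF
  have h2n : (0:ℝ) < 2^n := by positivity
  have heven : ∀ s, F (fun j => !(s j)) = F s := by
    intro s
    rw [hF]
    simp only
    rw [show lin a (fun j => !(s j)) = - lin a s from ?_, abs_neg]
    rw [lin, lin, ← Finset.sum_neg_distrib]
    refine Finset.sum_congr rfl fun j _ => ?_
    rw [sg_not]; ring
  have hEF2 : ∑ T : Finset (Fin n), (coef F T)^2 = ∑ i, (a i)^2 := by
    rw [parseval]
    have : ∀ s : Fin n → Bool, (F s)^2 = (lin a s)^2 := fun s => sq_abs _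
    rw [Finset.sum_congr rfl fun s _ => this s, sum_lin_sq]
    field_simp
  -- variance bound
  have hvar : ∑ T ∈ Finset.univ.erase ∅, (coef F T)^2 ≤ (1/2) * ∑ i, (a i)^2 := by
    have hterm : ∀ T ∈ (Finset.univ : Finset (Finset (Fin n))).erase ∅,
        (coef F T)^2 ≤ (1/2) * (T.card : ℝ) * (coef F T)^2 := by
      intro T hT
      by_cases hc : coef F T = 0
      · rw [hc]; simp
      · have hev : Even T.card := by
          by_contra hodd
          exact hc (coef_eq_zero_of_odd heven hodd)
        have hne : T ≠ ∅ := Finset.ne_of_mem_erase hT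
        have hpos : 0 < T.card := Finset.card_pos.2 (Finset.nonempty_iff_ne_empty.2 hne)
        have h2 : 2 ≤ T.card := by
          rcases hev with ⟨k, hk⟩
          omega
        have : (2:ℝ) ≤ (T.card : ℝ) := by exact_mod_cast h2
        nlinarith [sq_nonneg (coef F T)]
    calc ∑ T ∈ Finset.univ.erase ∅, (coef F T)^2
        ≤ ∑ T ∈ Finset.univ.erase ∅, (1/2) * (T.card : ℝ) * (coef F T)^2 :=
          Finset.sum_le_sum hterm
      _ ≤ ∑ T : Finset (Fin n), (1/2) * (T.card : ℝ) * (coef F T)^2 :=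
          Finset.sum_le_sum_of_subset_of_nonneg (Finset.erase_subset _ _)
            (fun T _ _ => by positivity)
      _ = (1/2) * ∑ T : Finset (Fin n), (T.card : ℝ) * (coef F T)^2 := by
          rw [Finset.mul_sum]; exact Finset.sum_congr rfl fun T _ => by ring
      _ ≤ (1/2) * ∑ i, (a i)^2 := by
          apply mul_le_mul_of_nonneg_left ?_ (by norm_num)
          -- swap double sum
          have hswap : ∑ T : Finset (Fin n), (T.card : ℝ) * (coef F T)^2
              = ∑ i : Fin n, ∑ T ∈ Finset.univ.filter
                  (fun T : Finset (Fin n) => i ∈ T), (coef F T)^2 := by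
            have hcard : ∀ T : Finset (Fin n), (T.card : ℝ) * (coef F T)^2
                = ∑ i : Fin n, if i ∈ T then (coef F T)^2 else 0 := by
              intro T
              rw [Finset.sum_ite_mem, Finset.univ_inter, Finset.sum_const, nsmul_eq_mul]
            rw [Finset.sum_congr rfl fun T _ => hcard T, Finset.sum_comm]
            exact Finset.sum_congr rfl fun i _ => (Finset.sum_filter _ _).symm
          rw [hswap]
          refine Finset.sum_le_sum fun i _ => ?_
          calc ∑ T ∈ Finset.univ.filter (fun T : Finset (Fin n) => i ∈ T), (coef F T)^2
              ≤ (2 ^ n : ℝ)⁻¹ * ∑ s : Fin n → Bool, (D F i s)^2 := sum_coef_sq_mem_le F i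
            _ ≤ (2 ^ n : ℝ)⁻¹ * ∑ s : Fin n → Bool, (a i)^2 := by
                apply mul_le_mul_of_nonneg_left ?_ (by positivity)
                refine Finset.sum_le_sum fun s _ => ?_
                have := abs_D_le a i s
                calc (D F i s)^2 = |D F i s|^2 := (sq_abs _).symm
                  _ ≤ |a i|^2 := by
                      apply pow_le_pow_left₀ (abs_nonneg _) this
                  _ = (a i)^2 := sq_abs _
            _ = (a i)^2 := by
                rw [Finset.sum_const, card_bool_fun, nsmul_eq_mul]
                field_simp
                norm_num
  -- conclude
  have hsplit : (coef F ∅)^2 + ∑ T ∈ Finset.univ.erase ∅, (coef F T)^2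
      = ∑ i, (a i)^2 := by
    rw [← hEF2]
    exact Finset.add_sum_erase Finset.univ (fun T : Finset (Fin n) => (coef F T)^2) (Finset.mem_univ ∅)
  have hmean : (1/2) * ∑ i, (a i)^2 ≤ (coef F ∅)^2 := by linarith
  have hEFnn : 0 ≤ coef F ∅ := by
    rw [coef_abs_empty]
    positivity
  have : Real.sqrt (∑ i, (a i)^2) ≤ Real.sqrt (2 * (coef F ∅)^2) := by
    apply Real.sqrt_le_sqrt
    linarith
  calc Real.sqrt (∑ i, (a i)^2) ≤ Real.sqrt (2 * (coef F ∅)^2) := this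
    _ = Real.sqrt 2 * coef F ∅ := by
        rw [Real.sqrt_mul (by norm_num), Real.sqrt_sq hEFnn]
    _ = Real.sqrt 2 * ((2^n : ℝ)⁻¹ * ∑ s : Fin n → Bool, |lin a s|) := by
        rw [coef_abs_empty]


lemma inv_sqrt2_pos : (0:ℝ) < 1 / Real.sqrt 2 - 1/4 := by
  have h1 : Real.sqrt 2 < 4 := by
    have : Real.sqrt 2 < Real.sqrt 16 := by
      apply Real.sqrt_lt_sqrt <;> norm_num
    have h16 : Real.sqrt 16 = 4 := by
      rw [show (16:ℝ) = 4^2 by norm_num, Real.sqrt_sq (by norm_num)]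
    linarith
  have h2 : 0 < Real.sqrt 2 := Real.sqrt_pos.2 (by norm_num)
  rw [sub_pos, div_lt_div_iff₀ (by norm_num) h2]
  linarith

/-- deterministic core inequality -/
lemma det_core (f : ℝ → ℝ) (hmono : Monotone f) (hconc : ConcaveOn ℝ Set.univ f)
    (hf0 : f 0 = 0) (a : Fin n → ℝ) :
    (1 / Real.sqrt 2 - 1/4) * f (Real.sqrt (∑ i, (a i)^2))
      ≤ (2^n : ℝ)⁻¹ * ∑ s : Fin n → Bool, f |lin a s| := by
  have h2n : (0:ℝ) < 2^n := by positivity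
  set z := Real.sqrt (∑ i, (a i)^2) with hz
  have hznn : 0 ≤ z := Real.sqrt_nonneg _
  rcases eq_or_lt_of_le hznn with hz0 | hzpos
  · -- z = 0 : all a i = 0
    have hsum0 : ∑ i, (a i)^2 = 0 := by
      have h2 : 0 ≤ ∑ i, (a i)^2 := Finset.sum_nonneg fun i _ => sq_nonneg _
      have := Real.sqrt_eq_zero'.1 hz0.symm
      linarith
    have hai : ∀ i, a i = 0 := by
      intro i
      have := (Finset.sum_eq_zero_iff_of_nonneg (fun i _ => sq_nonneg (a i))).1 hsum0
        i (Finset.mem_univ i)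
      exact pow_eq_zero_iff (n := 2) (by norm_num) |>.1 this
    have hlin : ∀ s : Fin n → Bool, lin a s = 0 := by
      intro s; rw [lin]; exact Finset.sum_eq_zero fun j _ => by rw [hai j, zero_mul]
    rw [← hz0, hf0, mul_zero]
    rw [Finset.sum_congr rfl fun s _ => by rw [hlin s, abs_zero, hf0]]
    simp
  · -- z > 0
    have hfz : 0 ≤ f z := by rw [← hf0]; exact hmono hznn
    -- pointwise concavity bound
    have hpt : ∀ s : Fin n → Bool, (min |lin a s| z) * (f z / z) ≤ f |lin a s| := by
      intro s
      set F := |lin a s| with hFdef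
      have hFnn : 0 ≤ F := abs_nonneg _
      set t := min F z / z with ht
      have ht0 : 0 ≤ t := by positivity
      have ht1 : t ≤ 1 := by
        rw [ht, div_le_one hzpos]
        exact min_le_right _ _
      have hmin : t * z = min F z := by
        rw [ht]; field_simp
      have hcc := hconc.2 (Set.mem_univ z) (Set.mem_univ (0:ℝ)) ht0 (by linarith)
        (by ring : t + (1 - t) = 1)
      simp only [smul_eq_mul, mul_zero, add_zero, hf0] at hcc
      rw [hmin] at hcc
      calc min F z * (f z / z) = t * f z := by rw [← hmin]; field_simp
        _ ≤ f (min F z) := by linarith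
        _ ≤ f F := hmono (min_le_left _ _)
    -- pointwise min lower bound
    have hmin_lb : ∀ s : Fin n → Bool, |lin a s| - (lin a s)^2 / (4*z) ≤ min |lin a s| z := by
      intro s
      have hFnn : 0 ≤ |lin a s| := abs_nonneg _
      have hsq : (lin a s)^2 = |lin a s|^2 := (sq_abs _).symm
      rw [hsq]
      rcases le_total |lin a s| z with h | h
      · rw [min_eq_left h]
        have : 0 ≤ |lin a s|^2 / (4*z) := by positivity
        linarith
      · rw [min_eq_right h]
        rw [sub_le_iff_le_add, ← sub_le_iff_le_add']
        rw [le_div_iff₀ (by positivity : (0:ℝ) < 4*z)]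
        nlinarith [sq_nonneg (|lin a s| - 2*z)]
    -- averaging
    have hz2 : z^2 = ∑ i, (a i)^2 :=
      Real.sq_sqrt (Finset.sum_nonneg fun i _ => sq_nonneg _)
    set A := (2^n : ℝ)⁻¹ * ∑ s : Fin n → Bool, min |lin a s| z with hA
    have h1 : (f z / z) * A ≤ (2^n : ℝ)⁻¹ * ∑ s : Fin n → Bool, f |lin a s| := by
      rw [hA, ← mul_assoc, mul_comm (f z / z), mul_assoc]
      apply mul_le_mul_of_nonneg_left ?_ (le_of_lt (by positivity))
      rw [Finset.mul_sum]
      refine Finset.sum_le_sum fun s _ => ?_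
      rw [mul_comm]
      exact hpt s
    have havg : (2^n : ℝ)⁻¹ * ∑ s : Fin n → Bool, |lin a s|
        - z/4 ≤ A := by
      have hsum : ∑ s : Fin n → Bool, (|lin a s| - (lin a s)^2 / (4*z))
          ≤ ∑ s : Fin n → Bool, min |lin a s| z := Finset.sum_le_sum fun s _ => hmin_lb s
      have hexp : ∑ s : Fin n → Bool, (|lin a s| - (lin a s)^2 / (4*z))
          = ∑ s : Fin n → Bool, |lin a s| - (2^n : ℝ) * (∑ i, (a i)^2) / (4*z) := by
        rw [Finset.sum_sub_distrib, ← Finset.sum_div, sum_lin_sq]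
      rw [hexp] at hsum
      rw [hA]
      have h2n' : (0:ℝ) ≤ (2^n : ℝ)⁻¹ := by positivity
      have := mul_le_mul_of_nonneg_left hsum h2n'
      rw [mul_sub] at this
      have heq : (2^n : ℝ)⁻¹ * ((2^n : ℝ) * (∑ i, (a i)^2) / (4*z)) = z/4 := by
        rw [← hz2]
        field_simp
      rw [heq] at this
      exact this
    have hszk : z / Real.sqrt 2 ≤ (2^n : ℝ)⁻¹ * ∑ s : Fin n → Bool, |lin a s| := by
      have hs2 : (0:ℝ) < Real.sqrt 2 := Real.sqrt_pos.2 (by norm_num)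
      rw [div_le_iff₀ hs2, mul_comm]
      exact szarek a
    have hA_lb : z * (1 / Real.sqrt 2 - 1/4) ≤ A := by
      have : z * (1 / Real.sqrt 2 - 1/4) = z / Real.sqrt 2 - z/4 := by ring
      rw [this]
      linarith
    calc (1 / Real.sqrt 2 - 1/4) * f z
        = (f z / z) * (z * (1 / Real.sqrt 2 - 1/4)) := by field_simp
      _ ≤ (f z / z) * A := by
          apply mul_le_mul_of_nonneg_left hA_lb (by positivity)
      _ ≤ (2^n : ℝ)⁻¹ * ∑ s : Fin n → Bool, f |lin a s| := h1

lemma map_tuple_eq_pi {Ω : Type*} [MeasurableSpace Ω] (μ : Measure Ω)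
    [IsProbabilityMeasure μ] (Y : Fin n → Ω → ℝ) (hY : ∀ i, Measurable (Y i))
    (hind : iIndepFun Y μ) :
    μ.map (fun ω i => Y i ω) = Measure.pi (fun i => μ.map (Y i)) := by
  haveI : ∀ i, IsProbabilityMeasure (μ.map (Y i)) :=
    fun i => Measure.isProbabilityMeasure_map (hY i).aemeasurable
  have htuple : Measurable (fun ω i => Y i ω) := measurable_pi_lambda _ hY
  refine (Measure.pi_eq fun sets hsets => ?_).symm
  rw [Measure.map_apply htuple (MeasurableSet.univ_pi hsets)]
  have hpre : (fun ω i => Y i ω) ⁻¹' (Set.pi Set.univ sets) = ⋂ i ∈ Finset.univ, Y i ⁻¹' sets i := by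
    ext ω
    simp [Set.mem_pi]
  rw [hpre, hind.measure_inter_preimage_eq_mul Finset.univ (fun i _ => hsets i)]
  exact Finset.prod_congr rfl fun i _ =>
    (Measure.map_apply (hY i) (hsets i)).symm


end LowtherAux

open LowtherAux

theorem lowther_lemma {Ω : Type*} [MeasurableSpace Ω] (μ : Measure Ω)
    [IsProbabilityMeasure μ] {n : ℕ} (X : Fin n → Ω → ℝ)
    (hmeas : ∀ i, Measurable (X i))
    (hindep : iIndepFun X μ)
    (hsymm : ∀ i, μ.map (X i) = μ.map (fun ω => -X i ω))
    (f : ℝ → ℝ) (hmono : Monotone f) (hconc : ConcaveOn ℝ Set.univ f)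
    (hf0 : f 0 = 0)
    (hZint : Integrable (fun ω => f (Real.sqrt (∑ i, (X i ω)^2))) μ)
    (hYint : Integrable (fun ω => f |∑ i, X i ω|) μ) :
    ∫ ω, f (Real.sqrt (∑ i, (X i ω)^2)) ∂μ
      ≤ (1 / Real.sqrt 2 - 1/4)⁻¹ * ∫ ω, f |∑ i, X i ω| ∂μ := by
  classical
  set k : ℝ := 1 / Real.sqrt 2 - 1/4 with hk
  have hkpos : 0 < k := inv_sqrt2_pos
  -- the test function on the product space
  set g : (Fin n → ℝ) → ℝ := fun v => f |∑ i, v i| with hg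
  have hfmeas : Measurable f := hmono.measurable
  have hgmeas : Measurable g := by
    apply hfmeas.comp
    exact (Finset.measurable_sum Finset.univ fun i _ => measurable_pi_apply i).abs
  -- sign-flipped processes
  set Y : (Fin n → Bool) → Fin n → Ω → ℝ := fun c i ω => sg (c i) * X i ω with hY
  have hYmeas : ∀ c i, Measurable (Y c i) := fun c i => (hmeas i).const_mul _
  have hYindep : ∀ c, iIndepFun (Y c) μ := by
    intro c
    have := hindep.comp (fun i (x : ℝ) => sg (c i) * x)
      (fun i => measurable_const_mul _)
    exact this
  have hYmap : ∀ c i, μ.map (Y c i) = μ.map (X i) := by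
    intro c i
    cases hci : c i
    · have : Y c i = fun ω => - X i ω := by
        funext ω; rw [hY]; simp [hci, sg]
      rw [this, ← hsymm i]
    · have : Y c i = X i := by
        funext ω; rw [hY]; simp [hci, sg]
      rw [this]
  -- joint law invariance
  have hjoint : ∀ c, μ.map (fun ω i => Y c i ω) = μ.map (fun ω i => X i ω) := by
    intro c
    rw [map_tuple_eq_pi μ (Y c) (hYmeas c) (hYindep c),
      map_tuple_eq_pi μ X hmeas hindep]
    congr 1
    funext i
    exact hYmap c i
  have htupleX : Measurable (fun ω i => X i ω) := measurable_pi_lambda _ hmeas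
  have htupleY : ∀ c, Measurable (fun ω i => Y c i ω) :=
    fun c => measurable_pi_lambda _ (hYmeas c)
  -- integral invariance
  have hint_eq : ∀ c : Fin n → Bool,
      ∫ ω, g (fun i => Y c i ω) ∂μ = ∫ ω, f |∑ i, X i ω| ∂μ := by
    intro c
    have h1 : ∫ ω, g (fun i => Y c i ω) ∂μ = ∫ v, g v ∂(μ.map (fun ω i => Y c i ω)) :=
      (integral_map (htupleY c).aemeasurable hgmeas.aestronglyMeasurable).symm
    have h2 : ∫ v, g v ∂(μ.map (fun ω i => X i ω)) = ∫ ω, g (fun i => X i ω) ∂μ :=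
      integral_map htupleX.aemeasurable hgmeas.aestronglyMeasurable
    rw [h1, hjoint c, h2]
  -- integrability of each flipped integrand
  have hint_integrable : ∀ c : Fin n → Bool,
      Integrable (fun ω => g (fun i => Y c i ω)) μ := by
    intro c
    have hX' : Integrable (fun ω => g (fun i => X i ω)) μ := hYint
    have h1 : Integrable g (μ.map (fun ω i => X i ω)) :=
      (integrable_map_measure hgmeas.aestronglyMeasurable htupleX.aemeasurable).mpr hX'
    rw [← hjoint c] at h1
    exact (integrable_map_measure hgmeas.aestronglyMeasurable
      (htupleY c).aemeasurable).mp h1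
  -- pointwise bound
  have hpoint : ∀ ω, k * f (Real.sqrt (∑ i, (X i ω)^2))
      ≤ (2^n : ℝ)⁻¹ * ∑ c : Fin n → Bool, g (fun i => Y c i ω) := by
    intro ω
    have := det_core f hmono hconc hf0 (fun i => X i ω)
    rw [← hk] at this
    refine this.trans (le_of_eq ?_)
    congr 1
    refine Finset.sum_congr rfl fun c _ => ?_
    rw [hg]
    simp only
    congr 2
    rw [lin]
    exact Finset.sum_congr rfl fun j _ => mul_comm _ _
  -- integrate the pointwise bound
  have hrhs_integrable : Integrable
      (fun ω => (2^n : ℝ)⁻¹ * ∑ c : Fin n → Bool, g (fun i => Y c i ω)) μ :=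
    (integrable_finset_sum Finset.univ fun c _ => hint_integrable c).const_mul _
  have hlhs_integrable : Integrable
      (fun ω => k * f (Real.sqrt (∑ i, (X i ω)^2))) μ := hZint.const_mul k
  have hmono_int := integral_mono hlhs_integrable hrhs_integrable hpoint
  rw [integral_const_mul] at hmono_int
  have hrhs_eq : ∫ ω, (2^n : ℝ)⁻¹ * ∑ c : Fin n → Bool, g (fun i => Y c i ω) ∂μ
      = ∫ ω, f |∑ i, X i ω| ∂μ := by
    rw [integral_const_mul, integral_finset_sum Finset.univ fun c _ => hint_integrable c]
    rw [Finset.sum_congr rfl fun c _ => hint_eq c, Finset.sum_const, card_bool_fun,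
      nsmul_eq_mul]
    have h2n : ((2:ℝ)^n) ≠ 0 := by positivity
    push_cast
    rw [← mul_assoc, inv_mul_cancel₀ h2n, one_mul]
  rw [hrhs_eq] at hmono_int
  rw [show (1 / Real.sqrt 2 - 1/4)⁻¹ = k⁻¹ from rfl, le_inv_mul_iff₀ hkpos]
  exact hmono_int
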